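/- Let f be uniformly continuous on B' with modulus: ‖f(t₁,x) - f(t₂,y)‖₁ ≤ ε/2 whenever |t₁ - t₂| ≤ δ and ‖x - y‖₁ ≤ δ. Let φ be the Euler polygon built on a partition of mesh at most min(δ, δ/C) with slopes s_i satisfying ‖s_i - f(c_i, φ(c_i))‖₁ ≤ ε/2 and ‖s_i‖₁ ≤ C. Then for t in the interior of the i-th subinterval, ‖φ(t) - φ(c_i)‖₁ ≤ δ, and hence ‖s_i - f(t, φ(t))‖₁ ≤ ε. -/
import Mathlib


open Set

/-- The 1-norm on `Fin n → ℝ`. -/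
noncomputable def norm1 {n : ℕ} (v : Fin n → ℝ) : ℝ := ∑ i, |v i|

lemma norm1_smul {n : ℕ} (c : ℝ) (v : Fin n → ℝ) : norm1 (c • v) = |c| * norm1 v := by
  simp [norm1, Finset.mul_sum, abs_mul]

lemma norm1_add_le {n : ℕ} (v w : Fin n → ℝ) : norm1 (v + w) ≤ norm1 v + norm1 w := by
  calc ∑ i, |v i + w i| ≤ ∑ i, (|v i| + |w i|) := Finset.sum_le_sum (fun i _ => abs_add_le (v i) (w i))
    _ = _ := Finset.sum_add_distrib

/-- One step of the Euler polygon: on a subinterval of mesh at most `min δ (δ/C)`,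
the polygon moves at most `δ` from its left endpoint value, and the slope is an
`ε`-approximation of the vector field along the polygon. -/
theorem euler_step_estimate (n : ℕ) (f : ℝ → (Fin n → ℝ) → (Fin n → ℝ))
    (ε δ C : ℝ) (hε : 0 < ε) (hδ : 0 < δ) (hC : 0 < C)
    (hmod : ∀ t₁ t₂ : ℝ, ∀ x y : Fin n → ℝ,
      |t₁ - t₂| ≤ δ → norm1 (x - y) ≤ δ → norm1 (f t₁ x - f t₂ y) ≤ ε / 2)
    (cᵢ cᵢ₁ : ℝ) (hc : cᵢ < cᵢ₁) (hmesh : cᵢ₁ - cᵢ ≤ min δ (δ / C))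
    (φᵢ : Fin n → ℝ) (s : Fin n → ℝ)
    (hs : norm1 (s - f cᵢ φᵢ) ≤ ε / 2) (hsC : norm1 s ≤ C)
    (φ : ℝ → Fin n → ℝ)
    (hφ : ∀ t ∈ Icc cᵢ cᵢ₁, φ t = φᵢ + (t - cᵢ) • s) :
    ∀ t ∈ Ioo cᵢ cᵢ₁, norm1 (φ t - φᵢ) ≤ δ ∧ norm1 (s - f t (φ t)) ≤ ε := by
  intro t ht
  have htI : t ∈ Icc cᵢ cᵢ₁ := ⟨ht.1.le, ht.2.le⟩
  have hφt : φ t = φᵢ + (t - cᵢ) • s := hφ t htI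
  have ht0 : 0 ≤ t - cᵢ := by linarith [ht.1]
  have htδC : t - cᵢ ≤ δ / C := by
    have := le_trans hmesh (min_le_right _ _); linarith [ht.2]
  have htδ : t - cᵢ ≤ δ := by
    have := le_trans hmesh (min_le_left _ _); linarith [ht.2]
  have hnorm0 : 0 ≤ norm1 s := Finset.sum_nonneg (fun i _ => abs_nonneg _)
  have h1 : norm1 (φ t - φᵢ) ≤ δ := by
    have : φ t - φᵢ = (t - cᵢ) • s := by rw [hφt]; abel
    rw [this, norm1_smul, abs_of_nonneg ht0]
    calc (t - cᵢ) * norm1 s ≤ (δ / C) * C := by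
          exact mul_le_mul htδC hsC hnorm0 (by positivity)
      _ = δ := by field_simp
  refine ⟨h1, ?_⟩
  have habs : |cᵢ - t| ≤ δ := by rw [abs_sub_comm, abs_of_nonneg ht0]; exact htδ
  have hf : norm1 (f cᵢ φᵢ - f t (φ t)) ≤ ε / 2 := by
    have h1' : norm1 (φᵢ - φ t) ≤ δ := by
      have : φᵢ - φ t = -(φ t - φᵢ) := by abel
      rw [this]; simpa [norm1, abs_sub_comm] using h1
    exact hmod cᵢ t φᵢ (φ t) habs h1'
  have : s - f t (φ t) = (s - f cᵢ φᵢ) + (f cᵢ φᵢ - f t (φ t)) := by abel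
  rw [this]
  calc norm1 _ ≤ _ + _ := norm1_add_le _ _
    _ ≤ ε / 2 + ε / 2 := add_le_add hs hf
    _ = ε := by ring
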